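/- arXiv:2602.10348 — 10 statements merged into one kernel-verified Lean document; each statement's English description precedes it below -/
import Mathlib

section
/- Let $C'$ be a $(p+q) \times (p+q)$ real symmetric positive definite matrix with leading principal $p \times p$ block $C$, and let $G' \in \mathbb{R}^{(p+q) \times k}$ be a matrix whose first $p$ rows form the matrix $G \in \mathbb{R}^{p \times k}$. Then $G'^{\top} C'^{-1} G' - G^{\top} C^{-1} G$ is positive semidefinite. -/
open Matrix

/-- If `C'` is a real symmetric positive definite `(p+q) × (p+q)` matrix with leading
principal `p × p` block `C`, and `G'` is a `(p+q) × k` matrix whose first `p` rows form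
`G`, then `G'ᵀ C'⁻¹ G' - Gᵀ C⁻¹ G` is positive semidefinite. -/
theorem stacked_information_monotone
    (p q k : ℕ) (C' : Matrix (Fin p ⊕ Fin q) (Fin p ⊕ Fin q) ℝ) (hC' : C'.PosDef)
    (C : Matrix (Fin p) (Fin p) ℝ) (hC : C = C'.toBlocks₁₁)
    (G' : Matrix (Fin p ⊕ Fin q) (Fin k) ℝ)
    (G : Matrix (Fin p) (Fin k) ℝ) (hG : G = G'.submatrix Sum.inl id) :
    (G'ᵀ * C'⁻¹ * G' - Gᵀ * C⁻¹ * G).PosSemidef := by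
  classical
  -- the inclusion matrix
  set E : Matrix (Fin p ⊕ Fin q) (Fin p) ℝ :=
    Matrix.of (fun i j => if i = Sum.inl j then 1 else 0) with hE
  have hEmul : ∀ {m : Type} [Fintype m] (A : Matrix (Fin p ⊕ Fin q) m ℝ),
      Eᵀ * A = A.submatrix Sum.inl id := by
    intro m _ A
    ext i j
    simp [Matrix.mul_apply, hE, Matrix.transpose_apply]
  have hmulE : ∀ {m : Type} [Fintype m] (A : Matrix m (Fin p ⊕ Fin q) ℝ),
      A * E = A.submatrix id Sum.inl := by
    intro m _ A
    ext i j
    simp [Matrix.mul_apply, hE]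
  have hEG : Eᵀ * G' = G := by rw [hEmul, hG]
  have hGE : G'ᵀ * E = Gᵀ := by
    have := congrArg Matrix.transpose hEG
    simpa [Matrix.transpose_mul] using this
  have hECE : Eᵀ * C' * E = C := by
    rw [Matrix.mul_assoc, hmulE, hEmul, hC]
    ext i j
    simp [Matrix.toBlocks₁₁]
  -- C is positive definite
  have hCpd : C.PosDef := by
    refine posDef_iff_dotProduct_mulVec.mpr ⟨?_, ?_⟩
    · subst hC
      have h := hC'.isHermitian
      ext i j
      have := congrFun (congrFun h (Sum.inl i)) (Sum.inl j)
      simpa [Matrix.conjTranspose_apply, Matrix.toBlocks₁₁] using this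
    · intro x hx
      have hx' : (Sum.elim x 0 : Fin p ⊕ Fin q → ℝ) ≠ 0 := by
        intro h
        apply hx
        ext i
        exact congrFun h (Sum.inl i)
      have h := hC'.dotProduct_mulVec_pos hx'
      convert h using 1
      subst hC
      simp [dotProduct, Matrix.mulVec, Fintype.sum_sum_type,
        Matrix.toBlocks₁₁, dotProduct]
  have hCsymm : Cᵀ = C := by
    have := hCpd.isHermitian
    simpa [Matrix.conjTranspose_eq_transpose_of_trivial] using this.eq
  have hdC : IsUnit C.det := hCpd.det_pos.ne'.isUnit
  have hdC' : IsUnit C'.det := hC'.det_pos.ne'.isUnit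
  have hCinv_symm : (C⁻¹)ᵀ = C⁻¹ := by
    rw [Matrix.transpose_nonsing_inv, hCsymm]
  have hC'symm : C'ᵀ = C' := by
    have := hC'.isHermitian
    simpa [Matrix.conjTranspose_eq_transpose_of_trivial] using this.eq
  -- completing the square
  set Z : Matrix (Fin p ⊕ Fin q) (Fin k) ℝ := G' - C' * (E * (C⁻¹ * G)) with hZ
  have key : Zᵀ * C'⁻¹ * Z = G'ᵀ * C'⁻¹ * G' - Gᵀ * C⁻¹ * G := by
    have hZt : Zᵀ = G'ᵀ - Gᵀ * (C⁻¹ * (Eᵀ * C')) := by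
      rw [hZ]
      simp only [Matrix.transpose_sub, Matrix.transpose_mul, hCinv_symm, hC'symm,
        Matrix.mul_assoc]
    rw [hZt, hZ]
    simp only [Matrix.sub_mul, Matrix.mul_sub, Matrix.mul_assoc]
    have e1 : C'⁻¹ * (C' * (E * (C⁻¹ * G))) = E * (C⁻¹ * G) :=
      Matrix.nonsing_inv_mul_cancel_left _ _ hdC'
    rw [e1]
    have e2 : Gᵀ * (C⁻¹ * (Eᵀ * (C' * (C'⁻¹ * G')))) = Gᵀ * (C⁻¹ * G) := by
      rw [Matrix.mul_nonsing_inv_cancel_left _ _ hdC', hEG]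
    have e3 : G'ᵀ * (E * (C⁻¹ * G)) = Gᵀ * (C⁻¹ * G) := by
      rw [← Matrix.mul_assoc, hGE]
    have e4 : Gᵀ * (C⁻¹ * (Eᵀ * (C' * (E * (C⁻¹ * G))))) = Gᵀ * (C⁻¹ * G) := by
      have h1 : Eᵀ * (C' * (E * (C⁻¹ * G))) = C * (C⁻¹ * G) := by
        rw [← Matrix.mul_assoc, ← Matrix.mul_assoc, ← Matrix.mul_assoc, hECE,
          Matrix.mul_assoc]
      rw [h1, Matrix.mul_nonsing_inv_cancel_left _ _ hdC]
    rw [e2, e3, e4]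
    abel
  have hpsd : (Zᵀ * C'⁻¹ * Z).PosSemidef := by
    have h := (hC'.inv.posSemidef).conjTranspose_mul_mul_same Z
    have hZc : Zᴴ = Zᵀ := by
      ext i j
      simp [Matrix.conjTranspose_apply]
    rwa [hZc] at h
  rw [← key]
  exact hpsd
end

section
/- Let $C'$ be a $(p+q) \times (p+q)$ real symmetric positive definite matrix with leading principal $p \times p$ block $C$, and let $G' \in \mathbb{R}^{(p+q) \times k}$ be a matrix whose first $p$ rows form the matrix $G \in \mathbb{R}^{p \times k}$. If both $G^{\top} C^{-1} G$ and $G'^{\top} C'^{-1} G'$ are positive definite, then $(G^{\top} C^{-1} G)^{-1} - (G'^{\top} C'^{-1} G')^{-1}$ is positive semidefinite. -/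
open Matrix

section Aux

variable {n : Type*} [Fintype n] [DecidableEq n]

lemma qif_aux_key (M : Matrix n n ℝ) (hM : M.PosDef) (x u : n → ℝ) :
    2 * (u ⬝ᵥ x) - u ⬝ᵥ M *ᵥ u ≤ x ⬝ᵥ M⁻¹ *ᵥ x := by
  set y := M⁻¹ *ᵥ x with hy
  have hMy : M *ᵥ y = x := by
    rw [hy, mulVec_mulVec, Matrix.mul_nonsing_inv _ (isUnit_iff_ne_zero.mpr (ne_of_gt hM.det_pos)), one_mulVec]
  have hsym : Mᵀ = M := by
    have := hM.1; rwa [IsHermitian, conjTranspose_eq_transpose_of_trivial] at this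
  have h0 : (0:ℝ) ≤ (u - y) ⬝ᵥ M *ᵥ (u - y) := by
    have := hM.posSemidef.dotProduct_mulVec_nonneg (u - y); simpa using this
  have huMy : u ⬝ᵥ M *ᵥ y = u ⬝ᵥ x := by rw [hMy]
  have hyMu : y ⬝ᵥ M *ᵥ u = u ⬝ᵥ x := by
    rw [dotProduct_mulVec, ← mulVec_transpose, hsym, hMy, dotProduct_comm]
  have hyMy : y ⬝ᵥ M *ᵥ y = x ⬝ᵥ M⁻¹ *ᵥ x := by
    rw [hMy, dotProduct_comm, hy]
  have hexp : (u - y) ⬝ᵥ M *ᵥ (u - y)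
      = u ⬝ᵥ M *ᵥ u - 2 * (u ⬝ᵥ x) + x ⬝ᵥ M⁻¹ *ᵥ x := by
    simp only [mulVec_sub, dotProduct_sub, sub_dotProduct, huMy, hyMu, hyMy]
    ring
  nlinarith [h0, hexp]

lemma qif_aux_eq (M : Matrix n n ℝ) (hM : M.PosDef) (x : n → ℝ) :
    x ⬝ᵥ M⁻¹ *ᵥ x = 2 * ((M⁻¹ *ᵥ x) ⬝ᵥ x) - (M⁻¹ *ᵥ x) ⬝ᵥ M *ᵥ (M⁻¹ *ᵥ x) := by
  have hMy : M *ᵥ (M⁻¹ *ᵥ x) = x := by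
    rw [mulVec_mulVec, Matrix.mul_nonsing_inv _ (isUnit_iff_ne_zero.mpr (ne_of_gt hM.det_pos)), one_mulVec]
  rw [hMy, dotProduct_comm x (M⁻¹ *ᵥ x)]
  ring

/-- Inverse is antitone on positive definite matrices. -/
lemma qif_aux_inv_antitone (A B : Matrix n n ℝ) (hA : A.PosDef) (hB : B.PosDef)
    (h : ∀ u, u ⬝ᵥ A *ᵥ u ≤ u ⬝ᵥ B *ᵥ u) : (A⁻¹ - B⁻¹).PosSemidef := by
  rw [posSemidef_iff_dotProduct_mulVec]; constructor
  · have h1 := hA.posSemidef.isHermitian.inv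
    have h2 := hB.posSemidef.isHermitian.inv
    exact h1.sub h2
  · intro x
    have key : x ⬝ᵥ B⁻¹ *ᵥ x ≤ x ⬝ᵥ A⁻¹ *ᵥ x := by
      calc x ⬝ᵥ B⁻¹ *ᵥ x
          = 2 * ((B⁻¹ *ᵥ x) ⬝ᵥ x) - (B⁻¹ *ᵥ x) ⬝ᵥ B *ᵥ (B⁻¹ *ᵥ x) := qif_aux_eq B hB x
        _ ≤ 2 * ((B⁻¹ *ᵥ x) ⬝ᵥ x) - (B⁻¹ *ᵥ x) ⬝ᵥ A *ᵥ (B⁻¹ *ᵥ x) := by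
            have := h (B⁻¹ *ᵥ x); linarith
        _ ≤ x ⬝ᵥ A⁻¹ *ᵥ x := qif_aux_key A hA x (B⁻¹ *ᵥ x)
    have : star x ⬝ᵥ (A⁻¹ - B⁻¹) *ᵥ x
        = x ⬝ᵥ A⁻¹ *ᵥ x - x ⬝ᵥ B⁻¹ *ᵥ x := by
      simp [sub_mulVec, dotProduct_sub]
    rw [this]; linarith

end Aux

/-- If `C'` is a real symmetric positive definite `(p+q) × (p+q)` matrix with leading
principal `p × p` block `C`, `G'` is a `(p+q) × k` matrix whose first `p` rows form `G`,
and both information matrices `Gᵀ C⁻¹ G` and `G'ᵀ C'⁻¹ G'` are positive definite, then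
`(Gᵀ C⁻¹ G)⁻¹ - (G'ᵀ C'⁻¹ G')⁻¹` is positive semidefinite. -/
theorem qif_asymptotic_variance_monotone
    (p q k : ℕ) (C' : Matrix (Fin p ⊕ Fin q) (Fin p ⊕ Fin q) ℝ) (hC' : C'.PosDef)
    (C : Matrix (Fin p) (Fin p) ℝ) (hC : C = C'.toBlocks₁₁)
    (G' : Matrix (Fin p ⊕ Fin q) (Fin k) ℝ)
    (G : Matrix (Fin p) (Fin k) ℝ) (hG : G = G'.submatrix Sum.inl id)
    (hGCG : (Gᵀ * C⁻¹ * G).PosDef) (hGCG' : (G'ᵀ * C'⁻¹ * G').PosDef) :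
    ((Gᵀ * C⁻¹ * G)⁻¹ - (G'ᵀ * C'⁻¹ * G')⁻¹).PosSemidef := by
  -- C is positive definite
  have hCsym : C'ᵀ = C' := by
    have := hC'.1; rwa [IsHermitian, conjTranspose_eq_transpose_of_trivial] at this
  have hCpd : C.PosDef := by
    rw [posDef_iff_dotProduct_mulVec]; constructor
    · rw [IsHermitian, conjTranspose_eq_transpose_of_trivial]
      ext i j
      have : C'ᵀ (Sum.inl j) (Sum.inl i) = C' (Sum.inl j) (Sum.inl i) := by rw [hCsym]
      simpa [hC, toBlocks₁₁, transpose_apply] using congrFun (congrFun hCsym (Sum.inl i)) (Sum.inl j)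
    · intro x hx
      have hx' : (Sum.elim x 0 : Fin p ⊕ Fin q → ℝ) ≠ 0 := by
        intro hcon
        apply hx
        funext i
        have := congrFun hcon (Sum.inl i)
        simpa using this
      have := hC'.dotProduct_mulVec_pos hx'
      have heq : star (Sum.elim x 0) ⬝ᵥ C' *ᵥ (Sum.elim x 0 : Fin p ⊕ Fin q → ℝ)
          = star x ⬝ᵥ C *ᵥ x := by
        simp only [star_trivial, dotProduct, mulVec, Fintype.sum_sum_type, hC, toBlocks₁₁]
        simp [dotProduct, Matrix.of_apply]
      rwa [heq] at this
  apply qif_aux_inv_antitone _ _ hGCG hGCG'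
  -- comparison of quadratic forms
  intro u
  set w : Fin p → ℝ := G *ᵥ u with hw
  set w' : Fin p ⊕ Fin q → ℝ := G' *ᵥ u with hw'
  have hww' : ∀ i, w i = w' (Sum.inl i) := by
    intro i; simp [hw, hw', hG, mulVec, dotProduct, submatrix_apply]
  have hL : u ⬝ᵥ (Gᵀ * C⁻¹ * G) *ᵥ u = w ⬝ᵥ C⁻¹ *ᵥ w := by
    rw [← mulVec_mulVec, ← mulVec_mulVec, dotProduct_mulVec u, ← mulVec_transpose,
      transpose_transpose, ← hw, dotProduct_mulVec w]
  have hR : u ⬝ᵥ (G'ᵀ * C'⁻¹ * G') *ᵥ u = w' ⬝ᵥ C'⁻¹ *ᵥ w' := by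
    rw [← mulVec_mulVec, ← mulVec_mulVec, dotProduct_mulVec u, ← mulVec_transpose,
      transpose_transpose, ← hw', dotProduct_mulVec w']
  rw [hL, hR]
  -- use the variational characterization with test vector (C⁻¹ w, 0)
  set y : Fin p → ℝ := C⁻¹ *ᵥ w with hy
  have h1 : w ⬝ᵥ C⁻¹ *ᵥ w = 2 * (y ⬝ᵥ w) - y ⬝ᵥ C *ᵥ y := qif_aux_eq C hCpd w
  have h2 := qif_aux_key C' hC' w' (Sum.elim y 0)
  have hdot : (Sum.elim y 0 : Fin p ⊕ Fin q → ℝ) ⬝ᵥ w' = y ⬝ᵥ w := by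
    simp only [dotProduct, Fintype.sum_sum_type]
    simp [hww']
  have hquad : (Sum.elim y 0 : Fin p ⊕ Fin q → ℝ) ⬝ᵥ C' *ᵥ (Sum.elim y 0) = y ⬝ᵥ C *ᵥ y := by
    simp only [dotProduct, mulVec, Fintype.sum_sum_type, hC, toBlocks₁₁]
    simp [dotProduct, Matrix.of_apply]
  rw [hdot, hquad] at h2
  linarith
end

section
/- Let $C$ be an $n \times n$ real symmetric positive definite matrix, let $G \in \mathbb{R}^{n \times k}$ be such that $G^{\top} C^{-1} G$ is positive definite, and let $H \in \mathbb{R}^{n \times m}$ be arbitrary. Then $H^{\top} C H - H^{\top} G \,(G^{\top} C^{-1} G)^{-1}\, G^{\top} H$ is positive semidefinite. -/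
open Matrix

/-- Matrix Cauchy–Schwarz inequality in the Loewner order: for a real symmetric positive
definite `n × n` matrix `C`, an `n × k` matrix `G` with `Gᵀ C⁻¹ G` positive definite, and
an arbitrary `n × m` matrix `H`, the matrix `Hᵀ C H - Hᵀ G (Gᵀ C⁻¹ G)⁻¹ Gᵀ H` is
positive semidefinite. -/
theorem matrix_cauchy_schwarz_loewner
    (n k m : ℕ) (C : Matrix (Fin n) (Fin n) ℝ) (hC : C.PosDef)
    (G : Matrix (Fin n) (Fin k) ℝ) (hGCG : (Gᵀ * C⁻¹ * G).PosDef)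
    (H : Matrix (Fin n) (Fin m) ℝ) :
    (Hᵀ * C * H - Hᵀ * G * (Gᵀ * C⁻¹ * G)⁻¹ * Gᵀ * H).PosSemidef := by
  set A : Matrix (Fin k) (Fin k) ℝ := Gᵀ * C⁻¹ * G with hA
  set B : Matrix (Fin k) (Fin k) ℝ := A⁻¹ with hB
  set M : Matrix (Fin n) (Fin m) ℝ := H - C⁻¹ * G * B * Gᵀ * H with hM
  have hCsym : Cᵀ = C := hC.isHermitian.eq
  have hCinv : C⁻¹.PosDef := hC.inv
  have hCinvSym : C⁻¹ᵀ = C⁻¹ := hCinv.isHermitian.eq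
  have hBsym : Bᵀ = B := hGCG.inv.isHermitian.eq
  have hCC : C * C⁻¹ = 1 := mul_nonsing_inv C hC.det_pos.ne'.isUnit
  have hBA : B * A = 1 := nonsing_inv_mul A hGCG.det_pos.ne'.isUnit
  have key : Mᵀ * C * M = Hᵀ * C * H - Hᵀ * G * B * Gᵀ * H := by
    have h1 : Mᵀ = Hᵀ - Hᵀ * G * B * Gᵀ * C⁻¹ := by
      simp [hM, transpose_sub, transpose_mul, hCinvSym, hBsym, Matrix.mul_assoc]
    rw [h1]
    have h2 : (Hᵀ - Hᵀ * G * B * Gᵀ * C⁻¹) * C = Hᵀ * C - Hᵀ * G * B * Gᵀ := by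
      rw [Matrix.sub_mul, Matrix.mul_assoc (Hᵀ * G * B * Gᵀ) C⁻¹ C,
        nonsing_inv_mul C hC.det_pos.ne'.isUnit, Matrix.mul_one]
    rw [h2, hM]
    rw [Matrix.mul_sub, Matrix.sub_mul, Matrix.sub_mul]
    have h3 : Hᵀ * C * (C⁻¹ * G * B * Gᵀ * H) = Hᵀ * G * B * Gᵀ * H := by
      rw [show Hᵀ * C * (C⁻¹ * G * B * Gᵀ * H) = Hᵀ * (C * C⁻¹) * G * B * Gᵀ * H by
        simp only [Matrix.mul_assoc], hCC, Matrix.mul_one]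
    have h4 : Hᵀ * G * B * Gᵀ * (C⁻¹ * G * B * Gᵀ * H) = Hᵀ * G * B * Gᵀ * H := by
      rw [show Hᵀ * G * B * Gᵀ * (C⁻¹ * G * B * Gᵀ * H)
          = Hᵀ * G * (B * (Gᵀ * C⁻¹ * G)) * B * Gᵀ * H by simp only [Matrix.mul_assoc],
        ← hA, hBA, Matrix.mul_one]
    rw [h3, h4]
    abel
  rw [← key]
  have := hC.posSemidef.conjTranspose_mul_mul_same M
  simpa [conjTranspose_eq_transpose_of_trivial, Matrix.mul_assoc] using this
end

section
/- Let $C$ be an $n \times n$ real symmetric positive definite matrix, let $G \in \mathbb{R}^{n \times k}$ be such that $G^{\top} C^{-1} G$ is positive definite, and let $W$ be an $n \times n$ real symmetric matrix such that $G^{\top} W G$ is invertible. Then $(G^{\top} W G)^{-1} G^{\top} W\, C\, W G (G^{\top} W G)^{-1} \;-\; (G^{\top} C^{-1} G)^{-1}$ is positive semidefinite. -/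
open Matrix

/-- For a real symmetric positive definite `n × n` matrix `C`, an `n × k` matrix `G`
with `Gᵀ C⁻¹ G` positive definite, and a real symmetric `n × n` working weighting
matrix `W` with `Gᵀ W G` invertible, the sandwich variance dominates the optimally
weighted variance: `(Gᵀ W G)⁻¹ Gᵀ W C W G (Gᵀ W G)⁻¹ - (Gᵀ C⁻¹ G)⁻¹` is positive
semidefinite. -/
theorem sandwich_variance_ge_optimal
    (n k : ℕ) (C : Matrix (Fin n) (Fin n) ℝ) (hC : C.PosDef)
    (G : Matrix (Fin n) (Fin k) ℝ) (hGCG : (Gᵀ * C⁻¹ * G).PosDef)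
    (W : Matrix (Fin n) (Fin n) ℝ) (hW : W.IsSymm) (hGWG : IsUnit (Gᵀ * W * G)) :
    ((Gᵀ * W * G)⁻¹ * (Gᵀ * W * C * W * G) * (Gᵀ * W * G)⁻¹
      - (Gᵀ * C⁻¹ * G)⁻¹).PosSemidef := by
  set S := Gᵀ * C⁻¹ * G with hS
  set T := Gᵀ * W * G with hT
  have hSu : IsUnit S := hGCG.isUnit
  have hSSi : S * S⁻¹ = 1 := Matrix.mul_nonsing_inv S ((Matrix.isUnit_iff_isUnit_det S).1 hSu)
  have hTiT : T⁻¹ * T = 1 := Matrix.nonsing_inv_mul T ((Matrix.isUnit_iff_isUnit_det T).1 hGWG)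
  have hTTi : T * T⁻¹ = 1 := Matrix.mul_nonsing_inv T ((Matrix.isUnit_iff_isUnit_det T).1 hGWG)
  have hCsymm : Cᵀ = C := by simpa using hC.isHermitian.eq
  have hSsymm : Sᵀ = S := by simpa using hGCG.isHermitian.eq
  have hSisymm : S⁻¹ᵀ = S⁻¹ := by rw [transpose_nonsing_inv, hSsymm]
  have hWsymm : Wᵀ = W := hW
  have hTsymm : Tᵀ = T := by
    rw [hT, transpose_mul, transpose_mul, transpose_transpose, hWsymm, Matrix.mul_assoc]
  have hTisymm : T⁻¹ᵀ = T⁻¹ := by rw [transpose_nonsing_inv, hTsymm]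
  -- square root of C
  open scoped MatrixOrder in set R := CFC.sqrt C with hR
  have hRR : R * R = C := open scoped MatrixOrder in CFC.sqrt_mul_sqrt_self C hC.posSemidef.nonneg
  have hRsymm : Rᵀ = R := by open scoped MatrixOrder in simpa using (CFC.sqrt_nonneg C).posSemidef.isHermitian.eq
  have hRu : IsUnit R := by
    rw [Matrix.isUnit_iff_isUnit_det]
    have : R.det * R.det = C.det := by rw [← det_mul, hRR]
    exact isUnit_of_mul_isUnit_left (this ▸ hC.det_pos.ne'.isUnit)
  have hRdet := (Matrix.isUnit_iff_isUnit_det R).1 hRu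
  have hRiR : R⁻¹ * R = 1 := Matrix.nonsing_inv_mul R hRdet
  have hRRi : R * R⁻¹ = 1 := Matrix.mul_nonsing_inv R hRdet
  have hRiRi : R⁻¹ * R⁻¹ = C⁻¹ := by rw [← Matrix.mul_inv_rev, hRR]
  have hRisymm : R⁻¹ᵀ = R⁻¹ := by rw [transpose_nonsing_inv, hRsymm]
  set M := R⁻¹ * (G * S⁻¹ * Gᵀ) * R⁻¹ with hM
  have hMsymm : Mᵀ = M := by
    rw [hM, transpose_mul, transpose_mul, transpose_mul, transpose_mul,
      transpose_transpose, hRisymm, hSisymm]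
    simp only [Matrix.mul_assoc]
  have hM2 : M * M = M := by
    have h1 : M * M = R⁻¹ * (G * (S⁻¹ * (Gᵀ * (C⁻¹ * (G * (S⁻¹ * (Gᵀ * R⁻¹))))))) := by
      rw [hM, ← hRiRi]; simp only [Matrix.mul_assoc]
    have h2 : Gᵀ * (C⁻¹ * (G * (S⁻¹ * (Gᵀ * R⁻¹)))) = S * (S⁻¹ * (Gᵀ * R⁻¹)) := by
      rw [hS]; simp only [Matrix.mul_assoc]
    have h3 : S * (S⁻¹ * (Gᵀ * R⁻¹)) = Gᵀ * R⁻¹ := by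
      rw [← Matrix.mul_assoc, hSSi, Matrix.one_mul]
    rw [h1, h2, h3, hM]
    simp only [Matrix.mul_assoc]
  -- key PSD fact
  have hKey : (C - G * S⁻¹ * Gᵀ).PosSemidef := by
    have hRMR : R * M * R = G * S⁻¹ * Gᵀ := by
      rw [hM]
      calc R * (R⁻¹ * (G * S⁻¹ * Gᵀ) * R⁻¹) * R
          = (R * R⁻¹) * (G * S⁻¹ * Gᵀ) * (R⁻¹ * R) := by simp only [Matrix.mul_assoc]
        _ = G * S⁻¹ * Gᵀ := by rw [hRRi, hRiR, Matrix.one_mul, Matrix.mul_one]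
    have hEq : C - G * S⁻¹ * Gᵀ = ((1 - M) * R)ᴴ * ((1 - M) * R) := by
      have hconj : ((1 - M) * R)ᴴ = R * (1 - M) := by
        rw [conjTranspose_eq_transpose_of_trivial, transpose_mul, hRsymm,
          transpose_sub, transpose_one, hMsymm]
      rw [hconj]
      have expand : R * (1 - M) * ((1 - M) * R) = R * ((1 - M) * (1 - M)) * R := by
        simp only [Matrix.mul_assoc]
      have idem : (1 - M) * (1 - M) = 1 - M := by
        rw [Matrix.mul_sub, Matrix.sub_mul, Matrix.sub_mul, hM2]
        simp only [Matrix.one_mul, Matrix.mul_one]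
        abel
      rw [expand, idem, Matrix.mul_sub, Matrix.sub_mul, Matrix.mul_one, hRR, hRMR]
    rw [hEq]
    exact Matrix.posSemidef_conjTranspose_mul_self _
  -- conjugate by B = T⁻¹ Gᵀ W
  set B := T⁻¹ * Gᵀ * W with hB
  have hmain := hKey.mul_mul_conjTranspose_same B
  have hBconj : Bᴴ = W * G * T⁻¹ := by
    rw [conjTranspose_eq_transpose_of_trivial, hB, transpose_mul, transpose_mul,
      transpose_transpose, hWsymm, hTisymm, Matrix.mul_assoc]
  have hfinal : B * (C - G * S⁻¹ * Gᵀ) * Bᴴ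
      = T⁻¹ * (Gᵀ * W * C * W * G) * T⁻¹ - S⁻¹ := by
    rw [hBconj, hB, Matrix.mul_sub, Matrix.sub_mul]
    congr 1
    · simp only [Matrix.mul_assoc]
    · have e1 : T⁻¹ * Gᵀ * W * (G * S⁻¹ * Gᵀ) * (W * G * T⁻¹)
          = T⁻¹ * ((Gᵀ * W * G) * (S⁻¹ * ((Gᵀ * W * G) * T⁻¹))) := by
        simp only [Matrix.mul_assoc]
      rw [e1, ← hT, hTTi, Matrix.mul_one, ← Matrix.mul_assoc, hTiT, Matrix.one_mul]
  rw [hfinal] at hmain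
  exact hmain
end

section
/- Let $L \ge 1$ and $p \ge 1$, let $C$ be an $(Lp) \times (Lp)$ real symmetric positive definite matrix with leading principal $p \times p$ block $C_{11}$, and let $G \in \mathbb{R}^{(Lp) \times p}$ be a matrix whose first $p$ rows form an invertible matrix $G_1 \in \mathbb{R}^{p \times p}$. If $G^{\top} C^{-1} G$ is positive definite, then $G_1^{-1} C_{11} (G_1^{-1})^{\top} - (G^{\top} C^{-1} G)^{-1}$ is positive semidefinite. -/
open Matrix

/-- QIF never reduces efficiency relative to a single working correlation structure:
if `C` is a symmetric positive definite `(Lp) × (Lp)` matrix (indexed by blocks,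
with leading principal `p × p` block `C₁₁`), `G` is an `(Lp) × p` matrix whose first
`p` rows form an invertible matrix `G₁`, and `Gᵀ C⁻¹ G` is positive definite, then
`G₁⁻¹ C₁₁ (G₁⁻¹)ᵀ - (Gᵀ C⁻¹ G)⁻¹` is positive semidefinite. -/
theorem qif_never_less_efficient_than_single_basis
    (L p : ℕ) (hL : 1 ≤ L) (hp : 1 ≤ p)
    (C : Matrix (Fin L × Fin p) (Fin L × Fin p) ℝ) (hC : C.PosDef)
    (e : Fin p → Fin L × Fin p) (he : e = fun i => (⟨0, hL⟩, i))
    (C₁₁ : Matrix (Fin p) (Fin p) ℝ) (hC₁₁ : C₁₁ = C.submatrix e e)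
    (G : Matrix (Fin L × Fin p) (Fin p) ℝ)
    (G₁ : Matrix (Fin p) (Fin p) ℝ) (hG₁ : G₁ = G.submatrix e id)
    (hG₁inv : IsUnit G₁)
    (hGCG : (Gᵀ * C⁻¹ * G).PosDef) :
    (G₁⁻¹ * C₁₁ * (G₁⁻¹)ᵀ - (Gᵀ * C⁻¹ * G)⁻¹).PosSemidef := by
  set P : Matrix (Fin p) (Fin L × Fin p) ℝ :=
    (1 : Matrix (Fin L × Fin p) (Fin L × Fin p) ℝ).submatrix e id with hPdef
  have hPmul : ∀ (A : Matrix (Fin L × Fin p) (Fin L × Fin p) ℝ), P * A = A.submatrix e id := by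
    intro A
    ext i j
    simp [hPdef, mul_apply, one_apply, submatrix_apply]
  have hPmul' : P * G = G.submatrix e id := by
    ext i j
    simp [hPdef, mul_apply, one_apply, submatrix_apply]
  have hPT : Pᵀ = (1 : Matrix (Fin L × Fin p) (Fin L × Fin p) ℝ).submatrix id e := by
    rw [hPdef, transpose_submatrix, transpose_one]
  have hmulPT : ∀ (A : Matrix (Fin p) (Fin L × Fin p) ℝ), A * Pᵀ = A.submatrix id e := by
    intro A
    ext i j
    simp [hPT, mul_apply, one_apply, submatrix_apply]
  have hC11 : C₁₁ = P * C * Pᵀ := by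
    rw [hPmul, hmulPT, hC₁₁, submatrix_submatrix]
    rfl
  have hG1 : G₁ = P * G := by rw [hG₁, hPmul']
  -- invertibility facts
  have hCdet : IsUnit C.det := isUnit_iff_ne_zero.mpr hC.det_pos.ne'
  set H := Gᵀ * C⁻¹ * G with hHdef
  have hHdet : IsUnit H.det := isUnit_iff_ne_zero.mpr hGCG.det_pos.ne'
  have hG1det : IsUnit G₁.det := (isUnit_iff_isUnit_det G₁).mp hG₁inv
  have hCT : Cᵀ = C := hC.isHermitian.eq
  have hCinvT : (C⁻¹)ᵀ = C⁻¹ := by rw [transpose_nonsing_inv, hCT]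
  have hHT : Hᵀ = H := hGCG.isHermitian.eq
  have hHinvT : (H⁻¹)ᵀ = H⁻¹ := by rw [transpose_nonsing_inv, hHT]
  set M := G₁⁻¹ * P with hMdef
  set K := H⁻¹ * (Gᵀ * C⁻¹) with hKdef
  have hMG : M * G = 1 := by
    rw [hMdef, Matrix.mul_assoc, ← hG1, nonsing_inv_mul G₁ hG1det]
  have hKG : K * G = 1 := by
    rw [hKdef, Matrix.mul_assoc, ← hHdef, nonsing_inv_mul H hHdet]
  have hKT : Kᵀ = C⁻¹ * G * H⁻¹ := by
    rw [hKdef, transpose_mul, transpose_mul, hCinvT, transpose_transpose, hHinvT,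
      Matrix.mul_assoc]
  have hMCK : M * C * Kᵀ = H⁻¹ := by
    rw [hKT]
    calc M * C * (C⁻¹ * G * H⁻¹) = (M * (C * C⁻¹)) * G * H⁻¹ := by
          simp only [Matrix.mul_assoc]
      _ = H⁻¹ := by
          rw [mul_nonsing_inv C hCdet, Matrix.mul_one, hMG, Matrix.one_mul]
  have hKCM : K * C * Mᵀ = H⁻¹ := by
    rw [hKdef]
    calc H⁻¹ * (Gᵀ * C⁻¹) * C * Mᵀ
        = H⁻¹ * (Gᵀ * ((C⁻¹ * C) * Mᵀ)) := by simp only [Matrix.mul_assoc]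
      _ = H⁻¹ * (M * G)ᵀ := by
          rw [nonsing_inv_mul C hCdet, Matrix.one_mul, ← transpose_mul]
      _ = H⁻¹ := by rw [hMG, transpose_one, Matrix.mul_one]
  have hKCK : K * C * Kᵀ = H⁻¹ := by
    rw [hKT, hKdef]
    calc H⁻¹ * (Gᵀ * C⁻¹) * C * (C⁻¹ * G * H⁻¹)
        = H⁻¹ * (Gᵀ * ((C⁻¹ * (C * C⁻¹)) * G)) * H⁻¹ := by simp only [Matrix.mul_assoc]
      _ = H⁻¹ * H * H⁻¹ := by
          rw [mul_nonsing_inv C hCdet, Matrix.mul_one, hHdef]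
          simp only [Matrix.mul_assoc]
      _ = H⁻¹ := by rw [nonsing_inv_mul H hHdet, Matrix.one_mul]
  have key : G₁⁻¹ * C₁₁ * (G₁⁻¹)ᵀ - H⁻¹ = (M - K) * C * (M - K)ᵀ := by
    have hMCM : M * C * Mᵀ = G₁⁻¹ * C₁₁ * (G₁⁻¹)ᵀ := by
      rw [hMdef, hC11, transpose_mul]
      simp only [Matrix.mul_assoc]
    simp only [transpose_sub, Matrix.sub_mul, Matrix.mul_sub, hMCM, hMCK, hKCM, hKCK]
    abel
  rw [key]
  have hDT : (M - K)ᵀ = (M - K)ᴴ := by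
    ext i j
    simp [conjTranspose_apply, transpose_apply]
  rw [hDT]
  exact hC.posSemidef.mul_mul_conjTranspose_same (M - K)
end

section
/- Let $(\Omega, \mathcal{F}, P)$ be a probability space, let $n \ge 1$, let $Y_1, \dots, Y_n$ be integrable real random variables with $E[Y_k] = E[Y_1]$ for all $k$, and let $S = (S_1, \dots, S_n) : \Omega \to \{0,1\}^n$ be a random vector independent of the random vector $(Y_1, \dots, Y_n)$. Then $E\left[ \mathbf{1}\Big\{\sum_{k=1}^n S_k \ge 1\Big\} \cdot \frac{\sum_{k=1}^n S_k Y_k}{\sum_{k=1}^n S_k} \right] = E[Y_1] \cdot P\Big(\sum_{k=1}^n S_k \ge 1\Big).$ -/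
open MeasureTheory ProbabilityTheory

/-- Unbiasedness of the observed within-cluster average under non-informative sampling:
if the enrollment indicators `S = (S 1, …, S n)` (each valued in `{0,1}`) are jointly
independent of the outcomes `(Y 1, …, Y n)`, and all outcomes share the mean of `Y 1`,
then `E[ 1{∑ S k ≥ 1} · (∑ S k · Y k) / (∑ S k) ] = E[Y 1] · P(∑ S k ≥ 1)`. -/
theorem observed_cluster_average_unbiased
    {Ω : Type*} [MeasurableSpace Ω] (μ : Measure Ω) [IsProbabilityMeasure μ]
    (n : ℕ) (hn : 0 < n)
    (Y : Fin n → Ω → ℝ) (hYint : ∀ k, Integrable (Y k) μ)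
    (hYmean : ∀ k, ∫ ω, Y k ω ∂μ = ∫ ω, Y ⟨0, hn⟩ ω ∂μ)
    (S : Fin n → Ω → ℝ) (hSmeas : ∀ k, Measurable (S k))
    (hS01 : ∀ k ω, S k ω = 0 ∨ S k ω = 1)
    (hindep : IndepFun (fun ω => fun k => S k ω) (fun ω => fun k => Y k ω) μ) :
    ∫ ω, ({ω' | 1 ≤ ∑ k, S k ω'}.indicator (fun _ => (1 : ℝ)) ω)
        * ((∑ k, S k ω * Y k ω) / (∑ k, S k ω)) ∂μ
      = (∫ ω, Y ⟨0, hn⟩ ω ∂μ) * (μ {ω' | 1 ≤ ∑ k, S k ω'}).toReal := by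
  classical
  set g : Fin n → (Fin n → ℝ) → ℝ :=
    fun k s => if 1 ≤ ∑ i, s i then s k / ∑ i, s i else 0 with hg
  have hSvec : Measurable (fun ω => fun k => S k ω) :=
    measurable_pi_lambda _ fun k => hSmeas k
  have hsumS : Measurable (fun ω => ∑ k, S k ω) :=
    Finset.measurable_sum _ fun k _ => hSmeas k
  have hset : MeasurableSet {ω' | 1 ≤ ∑ k, S k ω'} :=
    measurableSet_le measurable_const hsumS
  have hgmeas : ∀ k, Measurable (g k) := by
    intro k
    apply Measurable.ite
    · exact measurableSet_le measurable_const
        (Finset.measurable_sum _ fun i _ => measurable_pi_apply i)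
    · exact (measurable_pi_apply k).div
        (Finset.measurable_sum _ fun i _ => measurable_pi_apply i)
    · exact measurable_const
  -- If the sum is not ≥ 1 then every S k ω = 0
  have hzero : ∀ ω, ¬ (1 ≤ ∑ k, S k ω) → ∀ k, S k ω = 0 := by
    intro ω h k
    by_contra hk
    rcases hS01 k ω with h0 | h1
    · exact hk h0
    · apply h
      calc (1:ℝ) = S k ω := h1.symm
        _ ≤ ∑ i, S i ω := by
            apply Finset.single_le_sum (f := fun i => S i ω) _ (Finset.mem_univ k)
            intro i _
            rcases hS01 i ω with h' | h' <;> simp [h']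
  -- pointwise bound on g composed with S
  have hgbd : ∀ k ω, ‖g k (fun i => S i ω)‖ ≤ 1 := by
    intro k ω
    simp only [hg, Real.norm_eq_abs]
    by_cases h : 1 ≤ ∑ i, S i ω
    · rw [if_pos h, abs_div]
      have hk : 0 ≤ S k ω ∧ S k ω ≤ 1 := by
        rcases hS01 k ω with h' | h' <;> simp [h']
      rw [abs_of_nonneg hk.1, abs_of_nonneg (le_trans zero_le_one h)]
      exact div_le_one_of_le₀ (hk.2.trans h) (le_trans zero_le_one h)
    · rw [if_neg h]; simp
  have hgint : ∀ k, Integrable (fun ω => g k (fun i => S i ω)) μ :=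
    fun k => ⟨((hgmeas k).comp hSvec).aestronglyMeasurable,
      HasFiniteIntegral.of_bounded (C := 1) (ae_of_all _ (hgbd k))⟩
  have hterm_int : ∀ k, Integrable (fun ω => g k (fun i => S i ω) * Y k ω) μ :=
    fun k => (hYint k).bdd_mul ((hgmeas k).comp hSvec).aestronglyMeasurable (c := 1) (ae_of_all _ (hgbd k))
  -- pointwise identity for the integrand
  have hpt : ∀ ω, ({ω' | 1 ≤ ∑ k, S k ω'}.indicator (fun _ => (1:ℝ)) ω)
      * ((∑ k, S k ω * Y k ω) / (∑ k, S k ω))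
      = ∑ k, g k (fun i => S i ω) * Y k ω := by
    intro ω
    by_cases h : 1 ≤ ∑ k, S k ω
    · simp only [Set.indicator_apply, Set.mem_setOf_eq, if_pos h, one_mul]
      rw [Finset.sum_div]
      refine Finset.sum_congr rfl fun k _ => ?_
      simp only [hg, if_pos h]
      ring
    · have := hzero ω h
      simp [Set.indicator_apply, Set.mem_setOf_eq, hg, h, this]
  -- sum of the g's equals the indicator
  have hgsum : ∀ ω, ∑ k, g k (fun i => S i ω)
      = {ω' | 1 ≤ ∑ k, S k ω'}.indicator (fun _ => (1:ℝ)) ω := by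
    intro ω
    by_cases h : 1 ≤ ∑ k, S k ω
    · simp only [Set.indicator_apply, Set.mem_setOf_eq, if_pos h, hg]
      rw [← Finset.sum_div, div_self]
      exact ne_of_gt (lt_of_lt_of_le zero_lt_one h)
    · simp [Set.indicator_apply, Set.mem_setOf_eq, hg, h]
  calc ∫ ω, ({ω' | 1 ≤ ∑ k, S k ω'}.indicator (fun _ => (1:ℝ)) ω)
        * ((∑ k, S k ω * Y k ω) / (∑ k, S k ω)) ∂μ
      = ∫ ω, ∑ k, g k (fun i => S i ω) * Y k ω ∂μ := by
        exact integral_congr_ae (ae_of_all _ hpt)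
    _ = ∑ k, ∫ ω, g k (fun i => S i ω) * Y k ω ∂μ :=
        integral_finset_sum _ fun k _ => hterm_int k
    _ = ∑ k, (∫ ω, g k (fun i => S i ω) ∂μ) * ∫ ω, Y k ω ∂μ := by
        refine Finset.sum_congr rfl fun k _ => ?_
        have hik : IndepFun (fun ω => g k (fun i => S i ω)) (Y k) μ :=
          hindep.comp (hgmeas k) (measurable_pi_apply k)
        exact hik.integral_fun_mul_eq_mul_integral (hgint k).aestronglyMeasurable (hYint k).aestronglyMeasurable
    _ = (∫ ω, Y ⟨0, hn⟩ ω ∂μ) * ∑ k, ∫ ω, g k (fun i => S i ω) ∂μ := by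
        rw [Finset.mul_sum]
        exact Finset.sum_congr rfl fun k _ => by rw [hYmean k, mul_comm]
    _ = (∫ ω, Y ⟨0, hn⟩ ω ∂μ) * (μ {ω' | 1 ≤ ∑ k, S k ω'}).toReal := by
        congr 1
        rw [← integral_finset_sum _ fun k _ => hgint k]
        rw [integral_congr_ae (ae_of_all _ hgsum)]
        rw [integral_indicator_const (1:ℝ) hset, smul_eq_mul, mul_one, measureReal_def]
end

section
/- Let $(\Omega, \mathcal{F}, P)$ be a probability space, $J \ge 1$, $Z : \Omega \to \{1, \dots, J\}$ measurable, and for each period $j \in \{1, \dots, J\}$ and each $z \in \{0, 1, \dots, j\}$ let $W_{j,z}$ be an integrable real random variable (the potential outcome at period $j$ under treatment start $z$, with $z = 0$ denoting never-yet-treated). Let $V$ be an integrable real random variable (a function of baseline covariates), and assume $Z$ is independent of the random vector consisting of all $W_{j,z}$ and $V$. Define the observed outcome $Y_j(\omega) = W_{j, Z(\omega)}(\omega)$ if $Z(\omega) \le j$ and $Y_j(\omega) = W_{j,0}(\omega)$ otherwise, and let $p_j = P(Z \le j)$. Assume the constant-treatment-effect model: there is $\Delta \in \mathbb{R}$ with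 $E[W_{j,z}] = E[W_{j,0}] + \Delta$ for every $j$ and every $1 \le z \le j$, and assume $\sum_{j=1}^J p_j (1 - p_j) > 0$. Then the unique $\beta \in \mathbb{R}$ satisfying $\sum_{j=1}^{J} E\big[ (\mathbf{1}\{Z \le j\} - p_j) \big( Y_j - (\mathbf{1}\{Z \le j\} - p_j)\beta - V \big) \big] = 0$ is $\beta = \Delta$. -/
open MeasureTheory ProbabilityTheory


lemma ind_mul_integral {Ω : Type*} [MeasurableSpace Ω] (μ : Measure Ω) [IsProbabilityMeasure μ]
    (Z : Ω → ℕ) (hZ : Measurable Z) (A : ℕ → Prop) [DecidablePred A]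
    (g : Ω → ℝ) (hg : AEStronglyMeasurable g μ)
    (hind : IndepFun Z g μ) :
    ∫ ω, (if A (Z ω) then (1:ℝ) else 0) * g ω ∂μ
      = (μ {ω | A (Z ω)}).toReal * ∫ ω, g ω ∂μ := by
  have hf : Measurable (fun ω => if A (Z ω) then (1:ℝ) else 0) :=
    (measurable_from_top (f := fun n => if A n then (1:ℝ) else 0)).comp hZ
  have hIF : IndepFun (fun ω => if A (Z ω) then (1:ℝ) else 0) g μ :=
    hind.comp (measurable_from_top (f := fun n => if A n then (1:ℝ) else 0)) measurable_id
  rw [hIF.integral_fun_mul_eq_mul_integral hf.aestronglyMeasurable hg]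
  congr 1
  have hs : MeasurableSet {ω | A (Z ω)} := hZ (by trivial)
  have : (fun ω => if A (Z ω) then (1:ℝ) else 0)
      = Set.indicator {ω | A (Z ω)} (fun _ => 1) := by
    funext ω; simp [Set.indicator_apply, Set.mem_setOf_eq]
  rw [this]
  exact integral_indicator_one hs

lemma ind_integral {Ω : Type*} [MeasurableSpace Ω] (μ : Measure Ω)
    (Z : Ω → ℕ) (hZ : Measurable Z) (A : ℕ → Prop) [DecidablePred A] :
    ∫ ω, (if A (Z ω) then (1:ℝ) else 0) ∂μ = (μ {ω | A (Z ω)}).toReal := by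
  have hs : MeasurableSet {ω | A (Z ω)} := hZ (by trivial)
  have : (fun ω => if A (Z ω) then (1:ℝ) else 0)
      = Set.indicator {ω | A (Z ω)} (fun _ => 1) := by
    funext ω; simp [Set.indicator_apply, Set.mem_setOf_eq]
  rw [this]
  exact integral_indicator_one hs

lemma ind_integrable {Ω : Type*} [MeasurableSpace Ω] {μ : Measure Ω}
    (Z : Ω → ℕ) (hZ : Measurable Z) (A : ℕ → Prop) [DecidablePred A]
    (g : Ω → ℝ) (hg : Integrable g μ) :
    Integrable (fun ω => (if A (Z ω) then (1:ℝ) else 0) * g ω) μ := by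
  refine hg.bdd_mul (c := 1) ?_ (Filter.Eventually.of_forall fun ω => ?_)
  · exact ((measurable_from_top (f := fun n => if A n then (1:ℝ) else 0)).comp
      hZ).aestronglyMeasurable
  · by_cases h : A (Z ω) <;> simp [h]


/-- Population-level consistency of the proposed estimator under the constant
treatment-effect model in a stepped-wedge design: with randomized treatment-start
period `Z` taking values in `{1, …, J}`, potential outcomes `W j z` (with `z = 0`
denoting not yet treated), an arbitrary integrable covariate-adjustment term `V`
independent (jointly with the potential outcomes) of `Z`, observed outcome
`Y j = W j Z` if `Z ≤ j` and `W j 0` otherwise, marginal probabilities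
`p j = P(Z ≤ j)` with `∑_j p j (1 - p j) > 0`, and a constant treatment effect `Δ`
(`E[W j z] = E[W j 0] + Δ` for all `1 ≤ z ≤ j ≤ J`), the unique root `β` of the
population normal equation
`∑_{j=1}^J E[(1{Z≤j} - p j)(Y j - (1{Z≤j} - p j) β - V)] = 0` is `β = Δ`. -/
theorem constant_effect_population_consistency
    {Ω : Type*} [MeasurableSpace Ω] (μ : Measure Ω) [IsProbabilityMeasure μ]
    (J : ℕ) (hJ : 1 ≤ J)
    (Z : Ω → ℕ) (hZ : Measurable Z) (hZrange : ∀ ω, 1 ≤ Z ω ∧ Z ω ≤ J)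
    (W : ℕ → ℕ → Ω → ℝ)
    (hWint : ∀ j, 1 ≤ j → j ≤ J → ∀ z, z ≤ j → Integrable (W j z) μ)
    (V : Ω → ℝ) (hVint : Integrable V μ)
    (hindep : IndepFun Z (fun ω => ((fun jz : ℕ × ℕ => W jz.1 jz.2 ω), V ω)) μ)
    (Y : ℕ → Ω → ℝ)
    (hY : ∀ j ω, Y j ω = if Z ω ≤ j then W j (Z ω) ω else W j 0 ω)
    (p : ℕ → ℝ) (hp : ∀ j, p j = (μ {ω | Z ω ≤ j}).toReal)
    (Δ : ℝ)
    (hΔ : ∀ j, 1 ≤ j → j ≤ J → ∀ z, 1 ≤ z → z ≤ j →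
      ∫ ω, W j z ω ∂μ = (∫ ω, W j 0 ω ∂μ) + Δ)
    (hpos : 0 < ∑ j ∈ Finset.Icc 1 J, p j * (1 - p j)) :
    ∀ β : ℝ,
      (∑ j ∈ Finset.Icc 1 J,
        ∫ ω, ((if Z ω ≤ j then (1 : ℝ) else 0) - p j)
          * (Y j ω - ((if Z ω ≤ j then (1 : ℝ) else 0) - p j) * β - V ω) ∂μ) = 0
      ↔ β = Δ := by
  intro β
  have hZV : IndepFun Z V μ :=
    hindep.comp measurable_id measurable_snd
  have hZW : ∀ j z, IndepFun Z (W j z) μ := fun j z =>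
    hindep.comp measurable_id ((measurable_pi_apply (j, z)).comp measurable_fst)
  have hterm : ∀ j ∈ Finset.Icc 1 J,
      (∫ ω, ((if Z ω ≤ j then (1 : ℝ) else 0) - p j)
        * (Y j ω - ((if Z ω ≤ j then (1 : ℝ) else 0) - p j) * β - V ω) ∂μ)
      = p j * (1 - p j) * (Δ - β) := by
    intro j hj
    obtain ⟨hj1, hj2⟩ := Finset.mem_Icc.mp hj
    have hW0 : Integrable (W j 0) μ := hWint j hj1 hj2 0 (Nat.zero_le j)
    set E0 : ℝ := ∫ ω, W j 0 ω ∂μ with hE0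
    -- pointwise decomposition
    have hpt : ∀ ω, ((if Z ω ≤ j then (1 : ℝ) else 0) - p j)
          * (Y j ω - ((if Z ω ≤ j then (1 : ℝ) else 0) - p j) * β - V ω)
        = (∑ z ∈ Finset.Icc 1 j, (if Z ω = z then (1:ℝ) else 0) * ((1 - p j) * W j z ω))
          + ((if ¬ (Z ω ≤ j) then (1:ℝ) else 0) * ((- p j) * W j 0 ω)
          + ((if Z ω ≤ j then (1:ℝ) else 0) * ((1 - 2 * p j) * (-β))
          + ((p j)^2 * (-β)
          + ((if Z ω ≤ j then (1:ℝ) else 0) * (-(V ω))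
          + p j * V ω)))) := by
      intro ω
      rw [hY]
      by_cases h : Z ω ≤ j
      · have hmem : Z ω ∈ Finset.Icc 1 j := Finset.mem_Icc.mpr ⟨(hZrange ω).1, h⟩
        have hsum : (∑ z ∈ Finset.Icc 1 j,
            (if Z ω = z then (1:ℝ) else 0) * ((1 - p j) * W j z ω))
            = (1 - p j) * W j (Z ω) ω := by
          simp only [ite_mul, one_mul, zero_mul]
          rw [Finset.sum_ite_eq]
          simp [hmem]
        rw [hsum]
        simp only [h, not_true, if_true, if_neg, ite_false, if_false,
          not_false_iff, ite_true]
        ring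
      · have hnmem : Z ω ∉ Finset.Icc 1 j := by
          simp only [Finset.mem_Icc, not_and]
          intro _; exact h
        have hsum : (∑ z ∈ Finset.Icc 1 j,
            (if Z ω = z then (1:ℝ) else 0) * ((1 - p j) * W j z ω)) = 0 := by
          simp only [ite_mul, one_mul, zero_mul]
          rw [Finset.sum_ite_eq]
          simp [hnmem]
        rw [hsum]
        simp only [h, not_false_iff, if_true, if_false, ite_true, ite_false]
        ring
    rw [integral_congr_ae (Filter.Eventually.of_forall hpt)]
    -- integrability of pieces
    have hB1int : ∀ z ∈ Finset.Icc 1 j,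
        Integrable (fun ω => (if Z ω = z then (1:ℝ) else 0) * ((1 - p j) * W j z ω)) μ := by
      intro z hz
      obtain ⟨_, hz2⟩ := Finset.mem_Icc.mp hz
      exact ind_integrable Z hZ (fun n => n = z) _ ((hWint j hj1 hj2 z hz2).const_mul _)
    have hB1 : Integrable (fun ω => ∑ z ∈ Finset.Icc 1 j,
        (if Z ω = z then (1:ℝ) else 0) * ((1 - p j) * W j z ω)) μ :=
      integrable_finset_sum _ hB1int
    have hB2 : Integrable (fun ω =>
        (if ¬ (Z ω ≤ j) then (1:ℝ) else 0) * ((- p j) * W j 0 ω)) μ :=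
      ind_integrable Z hZ (fun n => ¬ (n ≤ j)) _ (hW0.const_mul _)
    have hB3 : Integrable (fun ω =>
        (if Z ω ≤ j then (1:ℝ) else 0) * ((1 - 2 * p j) * (-β))) μ :=
      ind_integrable Z hZ (fun n => n ≤ j) _ (integrable_const _)
    have hB4 : Integrable (fun _ : Ω => (p j)^2 * (-β)) μ := integrable_const _
    have hB5 : Integrable (fun ω => (if Z ω ≤ j then (1:ℝ) else 0) * (-(V ω))) μ :=
      ind_integrable Z hZ (fun n => n ≤ j) _ hVint.neg
    have hB6 : Integrable (fun ω => p j * V ω) μ := hVint.const_mul _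
    -- split the integral
    have e1 : (∫ ω, ((∑ z ∈ Finset.Icc 1 j,
            (if Z ω = z then (1:ℝ) else 0) * ((1 - p j) * W j z ω))
          + ((if ¬ (Z ω ≤ j) then (1:ℝ) else 0) * ((- p j) * W j 0 ω)
          + ((if Z ω ≤ j then (1:ℝ) else 0) * ((1 - 2 * p j) * (-β))
          + ((p j)^2 * (-β)
          + ((if Z ω ≤ j then (1:ℝ) else 0) * (-(V ω))
          + p j * V ω))))) ∂μ)
        = (∫ ω, (∑ z ∈ Finset.Icc 1 j,
            (if Z ω = z then (1:ℝ) else 0) * ((1 - p j) * W j z ω)) ∂μ)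
          + (∫ ω, ((if ¬ (Z ω ≤ j) then (1:ℝ) else 0) * ((- p j) * W j 0 ω)
          + ((if Z ω ≤ j then (1:ℝ) else 0) * ((1 - 2 * p j) * (-β))
          + ((p j)^2 * (-β)
          + ((if Z ω ≤ j then (1:ℝ) else 0) * (-(V ω))
          + p j * V ω)))) ∂μ) :=
      integral_add hB1 (hB2.add (hB3.add (hB4.add (hB5.add hB6))))
    have e2 : (∫ ω, ((if ¬ (Z ω ≤ j) then (1:ℝ) else 0) * ((- p j) * W j 0 ω)
          + ((if Z ω ≤ j then (1:ℝ) else 0) * ((1 - 2 * p j) * (-β))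
          + ((p j)^2 * (-β)
          + ((if Z ω ≤ j then (1:ℝ) else 0) * (-(V ω))
          + p j * V ω)))) ∂μ)
        = (∫ ω, (if ¬ (Z ω ≤ j) then (1:ℝ) else 0) * ((- p j) * W j 0 ω) ∂μ)
          + (∫ ω, ((if Z ω ≤ j then (1:ℝ) else 0) * ((1 - 2 * p j) * (-β))
          + ((p j)^2 * (-β)
          + ((if Z ω ≤ j then (1:ℝ) else 0) * (-(V ω))
          + p j * V ω))) ∂μ) :=
      integral_add hB2 (hB3.add (hB4.add (hB5.add hB6)))
    have e3 : (∫ ω, ((if Z ω ≤ j then (1:ℝ) else 0) * ((1 - 2 * p j) * (-β))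
          + ((p j)^2 * (-β)
          + ((if Z ω ≤ j then (1:ℝ) else 0) * (-(V ω))
          + p j * V ω))) ∂μ)
        = (∫ ω, (if Z ω ≤ j then (1:ℝ) else 0) * ((1 - 2 * p j) * (-β)) ∂μ)
          + (∫ ω, ((p j)^2 * (-β)
          + ((if Z ω ≤ j then (1:ℝ) else 0) * (-(V ω))
          + p j * V ω)) ∂μ) :=
      integral_add hB3 (hB4.add (hB5.add hB6))
    have e4 : (∫ ω, ((p j)^2 * (-β)
          + ((if Z ω ≤ j then (1:ℝ) else 0) * (-(V ω))
          + p j * V ω)) ∂μ)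
        = (∫ _ω, ((p j)^2 * (-β) : ℝ) ∂μ)
          + (∫ ω, ((if Z ω ≤ j then (1:ℝ) else 0) * (-(V ω))
          + p j * V ω) ∂μ) :=
      integral_add hB4 (hB5.add hB6)
    have e5 : (∫ ω, ((if Z ω ≤ j then (1:ℝ) else 0) * (-(V ω))
          + p j * V ω) ∂μ)
        = (∫ ω, (if Z ω ≤ j then (1:ℝ) else 0) * (-(V ω)) ∂μ)
          + (∫ ω, p j * V ω ∂μ) :=
      integral_add hB5 hB6
    rw [e1, e2, e3, e4, e5]
    -- probability facts
    have hPle : (μ {ω | Z ω ≤ j}).toReal = p j := (hp j).symm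
    have hPgt : (μ {ω | ¬ Z ω ≤ j}).toReal = 1 - p j := by
      have hs : MeasurableSet {ω | Z ω ≤ j} := hZ (show MeasurableSet {n : ℕ | n ≤ j} by trivial)
      have hc : {ω | ¬ Z ω ≤ j} = {ω | Z ω ≤ j}ᶜ := rfl
      rw [hp j, hc, measure_compl hs (measure_ne_top μ _), measure_univ,
        ENNReal.toReal_sub_of_le prob_le_one ENNReal.one_ne_top, ENNReal.toReal_one]
    -- individual integrals
    have hI1 : (∫ ω, (∑ z ∈ Finset.Icc 1 j,
        (if Z ω = z then (1:ℝ) else 0) * ((1 - p j) * W j z ω)) ∂μ)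
        = p j * ((1 - p j) * (E0 + Δ)) := by
      rw [integral_finset_sum _ hB1int]
      have hstep : ∀ z ∈ Finset.Icc 1 j,
          (∫ ω, (if Z ω = z then (1:ℝ) else 0) * ((1 - p j) * W j z ω) ∂μ)
          = (μ {ω | Z ω = z}).toReal * ((1 - p j) * (E0 + Δ)) := by
        intro z hz
        obtain ⟨hz1, hz2⟩ := Finset.mem_Icc.mp hz
        rw [ind_mul_integral μ Z hZ (fun n => n = z) _
          ((hWint j hj1 hj2 z hz2).const_mul _).aestronglyMeasurable
          ((hZW j z).comp measurable_id (measurable_const_mul _)),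
          integral_const_mul, hΔ j hj1 hj2 z hz1 hz2]
      rw [Finset.sum_congr rfl hstep, ← Finset.sum_mul]
      congr 1
      rw [hp j, ← ENNReal.toReal_sum (fun z _ => measure_ne_top μ _)]
      congr 1
      have hm : ∀ b ∈ Finset.Icc 1 j, MeasurableSet {ω | Z ω = b} :=
        fun z _ => hZ (show MeasurableSet {n : ℕ | n = z} by trivial)
      rw [← measure_biUnion_finset ?_ hm]
      · congr 1
        ext ω
        simp only [Set.mem_iUnion, Set.mem_setOf_eq, Finset.mem_Icc, exists_prop]
        constructor
        · rintro ⟨z, ⟨_, hz2⟩, hzz⟩; omega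
        · intro h; exact ⟨Z ω, ⟨(hZrange ω).1, h⟩, rfl⟩
      · intro a _ b _ hab
        simp only [Function.onFun, Set.disjoint_left, Set.mem_setOf_eq]
        intro ω ha hb
        exact hab (ha ▸ hb ▸ rfl)
    have hI2 : (∫ ω, (if ¬ (Z ω ≤ j) then (1:ℝ) else 0) * ((- p j) * W j 0 ω) ∂μ)
        = (1 - p j) * ((- p j) * E0) := by
      rw [ind_mul_integral μ Z hZ (fun n => ¬ (n ≤ j)) _
        (hW0.const_mul _).aestronglyMeasurable
        ((hZW j 0).comp measurable_id (measurable_const_mul _)),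
        integral_const_mul, hPgt]
    have hI3 : (∫ ω, (if Z ω ≤ j then (1:ℝ) else 0) * ((1 - 2 * p j) * (-β)) ∂μ)
        = p j * ((1 - 2 * p j) * (-β)) := by
      rw [integral_mul_const, ind_integral μ Z hZ (fun n => n ≤ j), hPle]
    have hI4 : (∫ _ω, ((p j)^2 * (-β) : ℝ) ∂μ) = (p j)^2 * (-β) := by simp
    have hI5 : (∫ ω, (if Z ω ≤ j then (1:ℝ) else 0) * (-(V ω)) ∂μ)
        = p j * (- ∫ ω, V ω ∂μ) := by
      rw [ind_mul_integral μ Z hZ (fun n => n ≤ j) (fun ω => -(V ω))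
        hVint.neg.aestronglyMeasurable
        (hZV.comp measurable_id measurable_neg), hPle, integral_neg]
    have hI6 : (∫ ω, p j * V ω ∂μ) = p j * ∫ ω, V ω ∂μ := integral_const_mul _ _
    rw [hI1, hI2, hI3, hI4, hI5, hI6]
    ring
  rw [Finset.sum_congr rfl hterm, ← Finset.sum_mul]
  constructor
  · intro h
    rcases mul_eq_zero.mp h with h | h
    · exact absurd h (ne_of_gt hpos)
    · linarith [sub_eq_zero.mp h]
  · intro h
    rw [h]
    simp
end

section
/- Let $(\Omega, \mathcal{F}, P)$ be a probability space, $J \ge 1$, $Z : \Omega \to \{1, \dots, J\}$ measurable, and for each period $j \in \{1, \dots, J\}$ and each $z \in \{0, 1, \dots, j\}$ let $W_{j,z}$ be an integrable real random variable. Let $V$ be an integrable real random variable, and assume $Z$ is independent of the random vector consisting of all $W_{j,z}$ and $V$. Define the observed outcome $Y_j(\omega) = W_{j, Z(\omega)}(\omega)$ if $Z(\omega) \le j$ and $Y_j(\omega) = W_{j,0}(\omega)$ otherwise, and let $p_j = P(Z \le j)$. Assume the period-specific treatment-effect model: there are $\Delta_1, \dots, \Delta_J \in \mathbb{R}$ with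 $E[W_{j,z}] = E[W_{j,0}] + \Delta_j$ for every $j$ and every $1 \le z \le j$. Then for each $j$, $E\big[ (\mathbf{1}\{Z \le j\} - p_j) (Y_j - V) \big] = p_j (1 - p_j)\, \Delta_j$. -/
open MeasureTheory ProbabilityTheory

/-- Population-level unbiasedness of the estimating function under the period-specific
treatment-effect model in a stepped-wedge design: with randomized treatment-start period
`Z` valued in `{1, …, J}`, potential outcomes `W j z` (`z = 0` meaning not yet treated),
an integrable adjustment term `V` independent (jointly with the potential outcomes) of
`Z`, observed outcome `Y j = W j Z` if `Z ≤ j` and `W j 0` otherwise, `p j = P(Z ≤ j)`,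
and period-specific effects `Δ j` (`E[W j z] = E[W j 0] + Δ j` for `1 ≤ z ≤ j`),
we have `E[(1{Z≤j} - p j)(Y j - V)] = p j (1 - p j) Δ j` for each `1 ≤ j ≤ J`. -/
theorem period_specific_moment_identity
    {Ω : Type*} [MeasurableSpace Ω] (μ : Measure Ω) [IsProbabilityMeasure μ]
    (J : ℕ) (hJ : 1 ≤ J)
    (Z : Ω → ℕ) (hZ : Measurable Z) (hZrange : ∀ ω, 1 ≤ Z ω ∧ Z ω ≤ J)
    (W : ℕ → ℕ → Ω → ℝ)
    (hWint : ∀ j, 1 ≤ j → j ≤ J → ∀ z, z ≤ j → Integrable (W j z) μ)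
    (V : Ω → ℝ) (hVint : Integrable V μ)
    (hindep : IndepFun Z (fun ω => ((fun jz : ℕ × ℕ => W jz.1 jz.2 ω), V ω)) μ)
    (Y : ℕ → Ω → ℝ)
    (hY : ∀ j ω, Y j ω = if Z ω ≤ j then W j (Z ω) ω else W j 0 ω)
    (p : ℕ → ℝ) (hp : ∀ j, p j = (μ {ω | Z ω ≤ j}).toReal)
    (Δ : ℕ → ℝ)
    (hΔ : ∀ j, 1 ≤ j → j ≤ J → ∀ z, 1 ≤ z → z ≤ j →
      ∫ ω, W j z ω ∂μ = (∫ ω, W j 0 ω ∂μ) + Δ j) :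
    ∀ j, 1 ≤ j → j ≤ J →
      ∫ ω, ((if Z ω ≤ j then (1 : ℝ) else 0) - p j) * (Y j ω - V ω) ∂μ
        = p j * (1 - p j) * Δ j := by
  intro j hj1 hjJ
  classical
  have hmeasB : MeasurableSet {ω | Z ω ≤ j} := hZ (MeasurableSet.of_discrete : MeasurableSet {n : ℕ | n ≤ j})
  have hmeasA : ∀ z : ℕ, MeasurableSet {ω | Z ω = z} :=
    fun z => hZ (measurableSet_singleton z)
  -- the indicator of {Z ≤ j}
  have hIeq : (fun ω => if Z ω ≤ j then (1:ℝ) else 0)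
      = Set.indicator {ω | Z ω ≤ j} (fun _ => (1:ℝ)) := by
    funext ω; simp [Set.indicator_apply]
  have hIint : Integrable (fun ω => if Z ω ≤ j then (1:ℝ) else 0) μ := by
    rw [hIeq]; exact (integrable_const (1:ℝ)).indicator hmeasB
  have hIint' : Integrable (fun ω => (if Z ω ≤ j then (1:ℝ) else 0) - p j) μ :=
    hIint.sub (integrable_const _)
  have hIintegral : ∫ ω, (if Z ω ≤ j then (1:ℝ) else 0) ∂μ = p j := by
    rw [hIeq, integral_indicator_const _ hmeasB, hp]; simp [Measure.real]
  -- indicators of {Z = z}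
  have heeq : ∀ z : ℕ, (fun ω => if Z ω = z then (1:ℝ) else 0)
      = Set.indicator {ω | Z ω = z} (fun _ => (1:ℝ)) := by
    intro z; funext ω; simp [Set.indicator_apply]
  have heint : ∀ z : ℕ, Integrable (fun ω => if Z ω = z then (1:ℝ) else 0) μ := by
    intro z; rw [heeq z]; exact (integrable_const (1:ℝ)).indicator (hmeasA z)
  have heintegral : ∀ z : ℕ,
      ∫ ω, (if Z ω = z then (1:ℝ) else 0) ∂μ = (μ {ω | Z ω = z}).toReal := by
    intro z; rw [heeq z, integral_indicator_const _ (hmeasA z)]; simp [Measure.real]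
  -- independence for the baseline term
  have hindep0 : IndepFun (fun ω => (if Z ω ≤ j then (1:ℝ) else 0) - p j)
      (fun ω => W j 0 ω - V ω) μ := by
    have hf : Measurable (fun n : ℕ => (if n ≤ j then (1:ℝ) else 0) - p j) :=
      measurable_from_nat
    have hg : Measurable (fun q : (ℕ × ℕ → ℝ) × ℝ => q.1 (j, 0) - q.2) :=
      ((measurable_pi_apply (j, 0)).comp measurable_fst).sub measurable_snd
    exact hindep.comp hf hg
  -- independence for the within-period terms
  have hindepz : ∀ z : ℕ, IndepFun (fun ω => if Z ω = z then (1:ℝ) else 0)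
      (fun ω => (1 - p j) * (W j z ω - W j 0 ω)) μ := by
    intro z
    have hf : Measurable (fun n : ℕ => if n = z then (1:ℝ) else 0) :=
      measurable_from_nat
    have hg : Measurable (fun q : (ℕ × ℕ → ℝ) × ℝ =>
        (1 - p j) * (q.1 (j, z) - q.1 (j, 0))) :=
      (((measurable_pi_apply (j, z)).comp measurable_fst).sub
        ((measurable_pi_apply (j, 0)).comp measurable_fst)).const_mul _
    exact hindep.comp hf hg
  have hW0 : Integrable (W j 0) μ := hWint j hj1 hjJ 0 (Nat.zero_le _)
  have hWz : ∀ z ∈ Finset.Icc 1 j, Integrable (W j z) μ := by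
    intro z hz
    exact hWint j hj1 hjJ z (Finset.mem_Icc.mp hz).2
  -- integrability of each summand
  have hint0 : Integrable (fun ω =>
      ((if Z ω ≤ j then (1:ℝ) else 0) - p j) * (W j 0 ω - V ω)) μ :=
    hindep0.integrable_mul hIint' (hW0.sub hVint)
  have hintz : ∀ z ∈ Finset.Icc 1 j, Integrable (fun ω =>
      (if Z ω = z then (1:ℝ) else 0) * ((1 - p j) * (W j z ω - W j 0 ω))) μ := by
    intro z hz
    exact (hindepz z).integrable_mul (heint z) (((hWz z hz).sub hW0).const_mul _)
  -- pointwise decomposition of the integrand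
  have key : ∀ ω, ((if Z ω ≤ j then (1:ℝ) else 0) - p j) * (Y j ω - V ω)
      = ((if Z ω ≤ j then (1:ℝ) else 0) - p j) * (W j 0 ω - V ω)
        + ∑ z ∈ Finset.Icc 1 j,
            (if Z ω = z then (1:ℝ) else 0) * ((1 - p j) * (W j z ω - W j 0 ω)) := by
    intro ω
    rw [hY]
    by_cases h : Z ω ≤ j
    · have hmem : Z ω ∈ Finset.Icc 1 j := Finset.mem_Icc.mpr ⟨(hZrange ω).1, h⟩
      rw [if_pos h, if_pos h,
        Finset.sum_eq_single (Z ω) (fun b _ hb => by rw [if_neg (Ne.symm hb), zero_mul])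
          (fun hc => absurd hmem hc), if_pos rfl]
      ring
    · rw [if_neg h, if_neg h, Finset.sum_eq_zero, add_zero]
      intro z hz
      have : Z ω ≠ z := fun he => h (he ▸ (Finset.mem_Icc.mp hz).2)
      rw [if_neg this, zero_mul]
  -- split the integral
  rw [integral_congr_ae (Filter.Eventually.of_forall key),
    integral_add hint0 (integrable_finset_sum _ hintz),
    integral_finset_sum _ hintz]
  -- baseline term vanishes
  have h0 : ∫ ω, ((if Z ω ≤ j then (1:ℝ) else 0) - p j) * (W j 0 ω - V ω) ∂μ = 0 := by
    have hfun : (fun ω => ((if Z ω ≤ j then (1:ℝ) else 0) - p j) * (W j 0 ω - V ω))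
        = (fun ω => (if Z ω ≤ j then (1:ℝ) else 0) - p j) * (fun ω => W j 0 ω - V ω) := rfl
    rw [hfun, hindep0.integral_mul_eq_mul_integral hIint'.aestronglyMeasurable (hW0.sub hVint).aestronglyMeasurable]
    have : ∫ ω, ((if Z ω ≤ j then (1:ℝ) else 0) - p j) ∂μ = 0 := by
      rw [integral_sub hIint (integrable_const _), hIintegral, integral_const]
      simp
    rw [this, zero_mul]
  rw [h0, zero_add]
  -- within-period terms
  have hz : ∀ z ∈ Finset.Icc 1 j,
      ∫ ω, (if Z ω = z then (1:ℝ) else 0) * ((1 - p j) * (W j z ω - W j 0 ω)) ∂μ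
        = (μ {ω | Z ω = z}).toReal * ((1 - p j) * Δ j) := by
    intro z hz
    have hfun : (fun ω => (if Z ω = z then (1:ℝ) else 0) * ((1 - p j) * (W j z ω - W j 0 ω)))
        = (fun ω => if Z ω = z then (1:ℝ) else 0)
          * (fun ω => (1 - p j) * (W j z ω - W j 0 ω)) := rfl
    rw [hfun, (hindepz z).integral_mul_eq_mul_integral (heint z).aestronglyMeasurable
        (((hWz z hz).sub hW0).const_mul _).aestronglyMeasurable, heintegral z]
    congr 1
    rw [integral_const_mul, integral_sub (hWz z hz) hW0,
      hΔ j hj1 hjJ z (Finset.mem_Icc.mp hz).1 (Finset.mem_Icc.mp hz).2]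
    ring
  rw [Finset.sum_congr rfl hz, ← Finset.sum_mul]
  -- sum of the atom probabilities equals p j
  have hpsum : ∑ z ∈ Finset.Icc 1 j, (μ {ω | Z ω = z}).toReal = p j := by
    rw [hp]
    rw [← ENNReal.toReal_sum (fun a _ => measure_ne_top μ _)]
    congr 1
    rw [← measure_biUnion_finset]
    · congr 1
      ext ω
      simp only [Set.mem_iUnion, Set.mem_setOf_eq, Finset.mem_Icc]
      constructor
      · rintro ⟨z, ⟨_, hz2⟩, rfl⟩; exact hz2
      · intro h; exact ⟨Z ω, ⟨(hZrange ω).1, h⟩, rfl⟩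
    · intro a _ b _ hab
      simp only [Set.disjoint_left, Set.mem_setOf_eq]
      intro ω h1 h2
      exact hab (h1 ▸ h2 ▸ rfl)
    · intro z _
      exact hmeasA z
  rw [hpsum]
  ring
end

section
/- Let $(\Omega, \mathcal{F}, P)$ be a probability space, $J \ge 1$, $Z : \Omega \to \{1, \dots, J\}$ measurable, and for each period $j \in \{1, \dots, J\}$ and each $z \in \{0, 1, \dots, j\}$ let $W_{j,z}$ be an integrable real random variable. Let $V$ be an integrable real random variable, and assume $Z$ is independent of the random vector consisting of all $W_{j,z}$ and $V$. Define the observed outcome $Y_j(\omega) = W_{j, Z(\omega)}(\omega)$ if $Z(\omega) \le j$ and $Y_j(\omega) = W_{j,0}(\omega)$ otherwise, and let $\pi_z = P(Z = z)$. Assume the duration-specific treatment-effect model: there is a function $\Delta : \{1, \dots, J\} \to \mathbb{R}$ with $E[W_{j,z}] = E[W_{j,0}] + \Delta(j - z + 1)$ for every $j$ and every $1 \le z \le j$. Then for every $j \in \{1, \dots, J\}$ and every $z \in \{1, \dots, J\}$, $E\big[ (\mathbf{1}\{Z = z\} - \pi_z)(Y_j - V) \big] = \pi_z \Big( \mathbf{1}\{z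 \le j\}\, \Delta(j - z + 1) - \sum_{z' = 1}^{j} \pi_{z'}\, \Delta(j - z' + 1) \Big).$ -/
open MeasureTheory ProbabilityTheory

/-- Population-level moment identity under the duration-specific treatment-effect model
in a stepped-wedge design: with randomized treatment-start period `Z` valued in
`{1, …, J}`, potential outcomes `W j z` (`z = 0` meaning not yet treated), an integrable
adjustment term `V` independent (jointly with the potential outcomes) of `Z`, observed
outcome `Y j = W j Z` if `Z ≤ j` and `W j 0` otherwise, `π z = P(Z = z)`, and
duration-specific effects (`E[W j z] = E[W j 0] + Δ (j - z + 1)` for `1 ≤ z ≤ j`),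
we have, for all `1 ≤ j ≤ J` and `1 ≤ z ≤ J`,
`E[(1{Z = z} - π z)(Y j - V)]
  = π z (1{z ≤ j} Δ (j - z + 1) - ∑_{z'=1}^{j} π z' Δ (j - z' + 1))`. -/
theorem duration_specific_moment_identity
    {Ω : Type*} [MeasurableSpace Ω] (μ : Measure Ω) [IsProbabilityMeasure μ]
    (J : ℕ) (hJ : 1 ≤ J)
    (Z : Ω → ℕ) (hZ : Measurable Z) (hZrange : ∀ ω, 1 ≤ Z ω ∧ Z ω ≤ J)
    (W : ℕ → ℕ → Ω → ℝ)
    (hWint : ∀ j, 1 ≤ j → j ≤ J → ∀ z, z ≤ j → Integrable (W j z) μ)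
    (V : Ω → ℝ) (hVint : Integrable V μ)
    (hindep : IndepFun Z (fun ω => ((fun jz : ℕ × ℕ => W jz.1 jz.2 ω), V ω)) μ)
    (Y : ℕ → Ω → ℝ)
    (hY : ∀ j ω, Y j ω = if Z ω ≤ j then W j (Z ω) ω else W j 0 ω)
    (π : ℕ → ℝ) (hπ : ∀ z, π z = (μ {ω | Z ω = z}).toReal)
    (Δ : ℕ → ℝ)
    (hΔ : ∀ j, 1 ≤ j → j ≤ J → ∀ z, 1 ≤ z → z ≤ j →
      ∫ ω, W j z ω ∂μ = (∫ ω, W j 0 ω ∂μ) + Δ (j - z + 1)) :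
    ∀ j, 1 ≤ j → j ≤ J → ∀ z, 1 ≤ z → z ≤ J →
      ∫ ω, ((if Z ω = z then (1 : ℝ) else 0) - π z) * (Y j ω - V ω) ∂μ
        = π z * ((if z ≤ j then Δ (j - z + 1) else 0)
            - ∑ z' ∈ Finset.Icc 1 j, π z' * Δ (j - z' + 1)) := by
  intro j hj1 hjJ z hz1 hzJ
  classical
  -- effective potential-outcome index for treatment sequence z'
  set a : ℕ → ℕ := fun z' => if z' ≤ j then z' else 0 with ha
  have haj : ∀ z', a z' ≤ j := by
    intro z'; by_cases h : z' ≤ j <;> simp [ha, h]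
  -- the "counterfactual observed" function for sequence z'
  set f : ℕ → Ω → ℝ := fun z' ω => W j (a z') ω - V ω with hf
  have hfint : ∀ z', Integrable (f z') μ :=
    fun z' => (hWint j hj1 hjJ (a z') (haj z')).sub hVint
  set I : ℕ → Ω → ℝ := fun z' ω => if Z ω = z' then (1 : ℝ) else 0 with hI
  have hset : ∀ z' : ℕ, MeasurableSet {ω | Z ω = z'} :=
    fun z' => hZ (measurableSet_singleton z')
  have hIind : ∀ z', I z' = Set.indicator {ω | Z ω = z'} (fun _ => (1 : ℝ)) := by
    intro z'; funext ω; simp [hI, Set.indicator_apply]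
  have hIint : ∀ z', Integrable (I z') μ := by
    intro z'
    rw [hIind z']
    exact (integrable_const (1 : ℝ)).indicator (hset z')
  have hIπ : ∀ z', ∫ ω, I z' ω ∂μ = π z' := by
    intro z'
    rw [hIind z', hπ]
    exact integral_indicator_one (μ := μ) (hset z')
  -- key independence computation
  have key : ∀ z', ∫ ω, I z' ω * f z' ω ∂μ = π z' * ∫ ω, f z' ω ∂μ := by
    intro z'
    have hφ : Measurable (fun n : ℕ => if n = z' then (1 : ℝ) else 0) :=
      measurable_from_top
    have hψ : Measurable (fun p : ((ℕ × ℕ → ℝ) × ℝ) => p.1 (j, a z') - p.2) :=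
      ((measurable_pi_apply (j, a z')).comp measurable_fst).sub measurable_snd
    have hIF : IndepFun (I z') (f z') μ := hindep.comp hφ hψ
    have h := ProbabilityTheory.IndepFun.integral_mul_eq_mul_integral hIF
      (hIint z').aestronglyMeasurable (hfint z').aestronglyMeasurable
    calc ∫ ω, I z' ω * f z' ω ∂μ = ∫ ω, (I z' * f z') ω ∂μ := rfl
      _ = (∫ ω, I z' ω ∂μ) * ∫ ω, f z' ω ∂μ := h
      _ = π z' * ∫ ω, f z' ω ∂μ := by rw [hIπ z']
  -- pointwise decomposition of Y j - V
  have hsum : ∀ ω, Y j ω - V ω = ∑ z' ∈ Finset.Icc 1 J, I z' ω * f z' ω := by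
    intro ω
    rw [Finset.sum_eq_single (Z ω)]
    · have : I (Z ω) ω = 1 := by simp [hI]
      rw [this, one_mul, hY, hf]
      by_cases hle : Z ω ≤ j <;> simp [ha, hle]
    · intro b _ hb
      have : I b ω = 0 := by
        simp only [hI]; exact if_neg fun h => hb h.symm
      simp [this]
    · intro h
      exact absurd (Finset.mem_Icc.mpr ⟨(hZrange ω).1, (hZrange ω).2⟩) h
  have hIf_eq : ∀ z', (fun ω => I z' ω * f z' ω)
      = Set.indicator {ω | Z ω = z'} (f z') := by
    intro z'; funext ω
    by_cases h : Z ω = z' <;> simp [hI, Set.indicator_apply, h]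
  have hIfint : ∀ z', Integrable (fun ω => I z' ω * f z' ω) μ := by
    intro z'
    rw [hIf_eq z']
    exact (hfint z').indicator (hset z')
  have hYVint : Integrable (fun ω => Y j ω - V ω) μ := by
    have : (fun ω => Y j ω - V ω)
        = fun ω => ∑ z' ∈ Finset.Icc 1 J, I z' ω * f z' ω := funext hsum
    rw [this]
    exact integrable_finset_sum _ fun z' _ => hIfint z'
  -- pointwise: I z * (Y j - V) = I z * f z
  have hz_pt : ∀ ω, I z ω * (Y j ω - V ω) = I z ω * f z ω := by
    intro ω
    by_cases h : Z ω = z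
    · have h1 : I z ω = 1 := by simp [hI, h]
      rw [h1, one_mul, one_mul, hY, hf, ← h]
      by_cases hle : Z ω ≤ j <;> simp [ha, hle]
    · have h0 : I z ω = 0 := by simp [hI, h]
      rw [h0, zero_mul, zero_mul]
  -- the first-moment quantities
  set m0 : ℝ := ∫ ω, W j 0 ω ∂μ with hm0
  set EV : ℝ := ∫ ω, V ω ∂μ with hEV
  have hfval : ∀ z', 1 ≤ z' →
      ∫ ω, f z' ω ∂μ = (if z' ≤ j then m0 + Δ (j - z' + 1) else m0) - EV := by
    intro z' hz'
    rw [hf]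
    rw [integral_sub (hWint j hj1 hjJ (a z') (haj z')) hVint]
    by_cases hle : z' ≤ j
    · simp only [ha, if_pos hle]
      rw [hΔ j hj1 hjJ z' hz' hle]
    · simp only [ha, if_neg hle]; rfl
  -- total mass: ∑ π z' = 1 over Icc 1 J
  have hπsum : ∑ z' ∈ Finset.Icc 1 J, π z' = 1 := by
    have hdisj : (↑(Finset.Icc 1 J : Finset ℕ) : Set ℕ).PairwiseDisjoint
        (fun z' => {ω | Z ω = z'}) := by
      intro x _ y _ hxy
      simp only [Function.onFun, Set.disjoint_left]
      rintro ω hx hy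
      exact hxy (hx.symm.trans hy)
    have hunion : (⋃ z' ∈ Finset.Icc 1 J, {ω | Z ω = z'}) = Set.univ := by
      ext ω
      simp only [Set.mem_iUnion, Set.mem_univ, iff_true, Set.mem_setOf_eq]
      exact ⟨Z ω, Finset.mem_Icc.mpr ⟨(hZrange ω).1, (hZrange ω).2⟩, rfl⟩
    have hmeas := measure_biUnion_finset (μ := μ) hdisj (fun z' _ => hset z')
    have h1 : ∑ z' ∈ Finset.Icc 1 J, μ {ω | Z ω = z'} = 1 := by
      rw [← hmeas, hunion, measure_univ]
    calc ∑ z' ∈ Finset.Icc 1 J, π z'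
        = ∑ z' ∈ Finset.Icc 1 J, (μ {ω | Z ω = z'}).toReal := by
          exact Finset.sum_congr rfl fun z' _ => hπ z'
      _ = (∑ z' ∈ Finset.Icc 1 J, μ {ω | Z ω = z'}).toReal :=
          (ENNReal.toReal_sum (fun z' _ => measure_ne_top μ _)).symm
      _ = 1 := by rw [h1]; simp
  -- expected value of Y j - V
  have hEYV : ∫ ω, (Y j ω - V ω) ∂μ
      = (m0 - EV) + ∑ z' ∈ Finset.Icc 1 j, π z' * Δ (j - z' + 1) := by
    have heq : (fun ω => Y j ω - V ω)
        = fun ω => ∑ z' ∈ Finset.Icc 1 J, I z' ω * f z' ω := funext hsum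
    rw [heq, integral_finset_sum _ fun z' _ => hIfint z']
    have : ∀ z' ∈ Finset.Icc 1 J,
        ∫ ω, I z' ω * f z' ω ∂μ
          = π z' * (m0 - EV) + (if z' ≤ j then π z' * Δ (j - z' + 1) else 0) := by
      intro z' hz'
      rw [key z', hfval z' (Finset.mem_Icc.mp hz').1]
      by_cases hle : z' ≤ j <;> simp [hle] <;> ring
    rw [Finset.sum_congr rfl this, Finset.sum_add_distrib, ← Finset.sum_mul, hπsum,
      one_mul]
    congr 1
    rw [← Finset.sum_subset (Finset.Icc_subset_Icc_right hjJ)]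
    · exact Finset.sum_congr rfl fun z' hz' =>
        if_pos (Finset.mem_Icc.mp hz').2
    · intro x hx hx'
      have : ¬ x ≤ j := by
        intro hle
        exact hx' (Finset.mem_Icc.mpr ⟨(Finset.mem_Icc.mp hx).1, hle⟩)
      simp [this]
  -- put it together
  have hsplit : ∫ ω, ((if Z ω = z then (1 : ℝ) else 0) - π z) * (Y j ω - V ω) ∂μ
      = (∫ ω, I z ω * f z ω ∂μ) - π z * ∫ ω, (Y j ω - V ω) ∂μ := by
    have heq : (fun ω => ((if Z ω = z then (1 : ℝ) else 0) - π z) * (Y j ω - V ω))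
        = fun ω => I z ω * f z ω - π z * (Y j ω - V ω) := by
      funext ω
      rw [← hz_pt ω]
      simp only [hI]
      ring
    rw [heq, integral_sub (hIfint z) (hYVint.const_mul _), integral_const_mul]
  rw [hsplit, key z, hfval z hz1, hEYV]
  by_cases hle : z ≤ j <;> simp [hle] <;> ring
end

section
/- Let $(\Omega, \mathcal{F}, P)$ be a probability space, let $\mathcal{G} \subseteq \mathcal{F}$ and $\mathcal{H} \subseteq \mathcal{G}$ be sub-$\sigma$-algebras, and let $Y$ be a square-integrable real random variable. Suppose the conditional expectation of $Y$ given $\mathcal{G}$ decomposes as $E[Y \mid \mathcal{G}] = c + \bar{g}$ almost surely, where $c$ is a bounded $\mathcal{G}$-measurable random variable and $\bar{g}$ is a square-integrable $\mathcal{H}$-measurable random variable. Let $f$ be a bounded $\mathcal{G}$-measurable random variable. Then for every square-integrable $\mathcal{H}$-measurable random variable $g$, $E\big[ f^2 (Y - c - g)^2 \big] \;\ge\; E\big[ f^2 (Y - c - \bar{g})^2 \big].$ -/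
open MeasureTheory
open scoped ENNReal

/-- Optimality of the true nuisance function (population content of Theorem 1):
let `𝒢 ≤ m` and `ℋ ≤ 𝒢` be sub-σ-algebras, `Y` square-integrable with
`E[Y | 𝒢] = c + ḡ` a.s., where `c` is bounded `𝒢`-measurable and `ḡ` is
square-integrable `ℋ`-measurable, and let `f` be bounded `𝒢`-measurable. Then for
every square-integrable `ℋ`-measurable `g`,
`E[f² (Y - c - g)²] ≥ E[f² (Y - c - ḡ)²]`. -/
theorem nuisance_limit_optimality
    {Ω : Type*} {m : MeasurableSpace Ω} {μ : Measure Ω} [IsProbabilityMeasure μ]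
    (𝒢 ℋ : MeasurableSpace Ω) (h𝒢 : 𝒢 ≤ m) (hℋ : ℋ ≤ 𝒢)
    (Y : Ω → ℝ) (hY : MemLp Y 2 μ)
    (c : Ω → ℝ) (hc_meas : Measurable[𝒢] c) (Mc : ℝ) (hc_bdd : ∀ ω, |c ω| ≤ Mc)
    (gbar : Ω → ℝ) (hgbar_meas : Measurable[ℋ] gbar) (hgbar : MemLp gbar 2 μ)
    (hdecomp : μ[Y | 𝒢] =ᵐ[μ] fun ω => c ω + gbar ω)
    (f : Ω → ℝ) (hf_meas : Measurable[𝒢] f) (Mf : ℝ) (hf_bdd : ∀ ω, |f ω| ≤ Mf) :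
    ∀ g : Ω → ℝ, Measurable[ℋ] g → MemLp g 2 μ →
      ∫ ω, (f ω) ^ 2 * (Y ω - c ω - gbar ω) ^ 2 ∂μ
        ≤ ∫ ω, (f ω) ^ 2 * (Y ω - c ω - g ω) ^ 2 ∂μ := by
  intro g hg_meas hg
  haveI : SigmaFinite (μ.trim h𝒢) := inferInstance
  -- measurability in the ambient σ-algebra
  have hf_m : Measurable[m] f := hf_meas.mono h𝒢 le_rfl
  have hc_m : Measurable[m] c := hc_meas.mono h𝒢 le_rfl
  have hgbar_m : Measurable[m] gbar := hgbar_meas.mono (hℋ.trans h𝒢) le_rfl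
  have hg_m : Measurable[m] g := hg_meas.mono (hℋ.trans h𝒢) le_rfl
  -- notation
  set D : Ω → ℝ := fun ω => gbar ω - g ω with hDdef
  set R : Ω → ℝ := fun ω => Y ω - c ω - gbar ω with hRdef
  set v : Ω → ℝ := fun ω => f ω ^ 2 * D ω with hvdef
  have hpqr : (1 : ℝ≥0∞) / 1 = 1 / 2 + 1 / 2 := by
    simp [ENNReal.inv_two_add_inv_two]
  -- Memℒp facts
  have hc2 : MemLp c 2 μ :=
    MemLp.of_bound hc_m.aestronglyMeasurable Mc
      (Filter.Eventually.of_forall fun ω => by simpa [Real.norm_eq_abs] using hc_bdd ω)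
  have hR : MemLp R 2 μ := (hY.sub hc2).sub hgbar
  have hD : MemLp D 2 μ := hgbar.sub hg
  have hf2_top : MemLp (fun ω => f ω ^ 2) ⊤ μ :=
    memLp_top_of_bound (hf_m.pow_const 2).aestronglyMeasurable (Mf ^ 2)
      (Filter.Eventually.of_forall fun ω => by
        have := hf_bdd ω
        have h0 : |f ω| ≤ Mf := this
        calc ‖f ω ^ 2‖ = |f ω| ^ 2 := by rw [Real.norm_eq_abs, ← abs_pow, abs_pow]
          _ ≤ Mf ^ 2 := by
            have : (0:ℝ) ≤ |f ω| := abs_nonneg _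
            exact pow_le_pow_left₀ this h0 2)
  have hv : MemLp v 2 μ := hD.smul hf2_top
  have hv_sm : StronglyMeasurable[𝒢] v :=
    ((hf_meas.pow_const 2).mul
      ((hgbar_meas.mono hℋ le_rfl).sub (hg_meas.mono hℋ le_rfl))).stronglyMeasurable
  -- integrability of products
  have hY_int : Integrable Y μ := hY.integrable one_le_two
  have hvY : Integrable (fun ω => v ω * Y ω) μ :=
    memLp_one_iff_integrable.mp (hY.smul (r := 1) hv)
  have hvcg : Integrable (fun ω => v ω * (c ω + gbar ω)) μ :=
    memLp_one_iff_integrable.mp ((hc2.add hgbar).smul (r := 1) hv)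
  have hvR : Integrable (fun ω => v ω * R ω) μ :=
    memLp_one_iff_integrable.mp (hR.smul (r := 1) hv)
  have hR2 : Integrable (fun ω => f ω ^ 2 * R ω ^ 2) μ :=
    hR.integrable_sq.bdd_mul (hf_m.pow_const 2).aestronglyMeasurable
      (Filter.Eventually.of_forall fun ω => by
        calc ‖f ω ^ 2‖ = |f ω| ^ 2 := by rw [Real.norm_eq_abs, ← abs_pow, abs_pow]
          _ ≤ Mf ^ 2 := pow_le_pow_left₀ (abs_nonneg _) (hf_bdd ω) 2)
  have hD2 : Integrable (fun ω => f ω ^ 2 * D ω ^ 2) μ :=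
    hD.integrable_sq.bdd_mul (hf_m.pow_const 2).aestronglyMeasurable
      (Filter.Eventually.of_forall fun ω => by
        calc ‖f ω ^ 2‖ = |f ω| ^ 2 := by rw [Real.norm_eq_abs, ← abs_pow, abs_pow]
          _ ≤ Mf ^ 2 := pow_le_pow_left₀ (abs_nonneg _) (hf_bdd ω) 2)
  -- the cross term vanishes
  have hpull : μ[(fun ω => v ω * Y ω) | 𝒢] =ᵐ[μ] fun ω => v ω * (μ[Y | 𝒢]) ω := by
    have := condExp_mul_of_stronglyMeasurable_left (μ := μ) hv_sm (g := Y) hvY hY_int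
    exact this
  have hkey : ∫ ω, v ω * R ω ∂μ = 0 := by
    have h1 : ∫ ω, v ω * Y ω ∂μ = ∫ ω, v ω * (c ω + gbar ω) ∂μ := by
      calc ∫ ω, v ω * Y ω ∂μ = ∫ ω, (μ[(fun ω => v ω * Y ω) | 𝒢]) ω ∂μ :=
            (integral_condExp h𝒢).symm
        _ = ∫ ω, v ω * (μ[Y | 𝒢]) ω ∂μ := integral_congr_ae hpull
        _ = ∫ ω, v ω * (c ω + gbar ω) ∂μ := by
            refine integral_congr_ae ?_
            filter_upwards [hdecomp] with ω hω
            rw [hω]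
    have h2 : ∫ ω, v ω * R ω ∂μ
        = ∫ ω, v ω * Y ω ∂μ - ∫ ω, v ω * (c ω + gbar ω) ∂μ := by
      rw [← integral_sub hvY hvcg]
      refine integral_congr_ae (Filter.Eventually.of_forall fun ω => ?_)
      simp only [hRdef]
      ring
    rw [h2, h1, sub_self]
  -- pointwise expansion
  have expand : ∀ ω, f ω ^ 2 * (Y ω - c ω - g ω) ^ 2
      = f ω ^ 2 * R ω ^ 2 + 2 * (v ω * R ω) + f ω ^ 2 * D ω ^ 2 := by
    intro ω
    simp only [hRdef, hDdef, hvdef]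
    ring
  have hRHS : ∫ ω, f ω ^ 2 * (Y ω - c ω - g ω) ^ 2 ∂μ
      = ∫ ω, f ω ^ 2 * R ω ^ 2 ∂μ + ∫ ω, f ω ^ 2 * D ω ^ 2 ∂μ := by
    calc ∫ ω, f ω ^ 2 * (Y ω - c ω - g ω) ^ 2 ∂μ
        = ∫ ω, (f ω ^ 2 * R ω ^ 2 + 2 * (v ω * R ω) + f ω ^ 2 * D ω ^ 2) ∂μ := by
          exact integral_congr_ae (Filter.Eventually.of_forall expand)
      _ = (∫ ω, (f ω ^ 2 * R ω ^ 2 + 2 * (v ω * R ω)) ∂μ)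
            + ∫ ω, f ω ^ 2 * D ω ^ 2 ∂μ :=
          integral_add (hR2.add (hvR.const_mul 2)) hD2
      _ = (∫ ω, f ω ^ 2 * R ω ^ 2 ∂μ + ∫ ω, 2 * (v ω * R ω) ∂μ)
            + ∫ ω, f ω ^ 2 * D ω ^ 2 ∂μ := by rw [integral_add hR2 (hvR.const_mul 2)]
      _ = ∫ ω, f ω ^ 2 * R ω ^ 2 ∂μ + ∫ ω, f ω ^ 2 * D ω ^ 2 ∂μ := by
          rw [integral_const_mul, hkey, mul_zero, add_zero]
  rw [hRHS]
  have hnn : 0 ≤ ∫ ω, f ω ^ 2 * D ω ^ 2 ∂μ :=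
    integral_nonneg fun ω => mul_nonneg (sq_nonneg _) (sq_nonneg _)
  linarith
end
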